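/- Let 𝒜 : X × X → ℝ and ℬ : X × Q → ℝ satisfy the hypotheses of the Brezzi theorem (𝒜 continuous and coercive on X₀ = ker B with constant β_𝒜, ℬ continuous with norm ‖ℬ‖ and inf-sup constant β_ℬ). Then the solution (x,z) of the saddle point problem 𝒜(x,ξ)+ℬ(ξ,z)=⟨F,ξ⟩, ℬ(x,ζ)=⟨G,ζ⟩ depends continuously on the data: there exist constants c₁,c₂ depending only on β_𝒜, β_ℬ, ‖𝒜‖, ‖ℬ‖ such that ‖x‖_X ≤ c₁(‖F‖_{X*} + ‖G‖_{Q*}) and ‖z‖_Q ≤ c₂(‖F‖_{X*} + ‖G‖_{Q*}). -/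

import Mathlib

open InnerProductSpace RealInnerProductSpace ContinuousLinearMap

set_option maxHeartbeats 1000000 in
/-- Stability estimate for the Brezzi saddle point problem: the solution depends
continuously on the data `F`, `G`, with constants depending only on the constants of
the forms `𝒜` and `ℬ`. -/
theorem brezzi_stability
    {X Q : Type*} [NormedAddCommGroup X] [InnerProductSpace ℝ X] [CompleteSpace X]
    [NormedAddCommGroup Q] [InnerProductSpace ℝ Q] [CompleteSpace Q]
    (A : X →L[ℝ] X →L[ℝ] ℝ) (B : X →L[ℝ] Q →L[ℝ] ℝ)
    (hAsymm : ∀ x ξ : X, A x ξ = A ξ x)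
    (βA : ℝ) (hβA : 0 < βA)
    (hAcoer : ∀ x : X, (∀ ζ : Q, B x ζ = 0) → βA * ‖x‖ ^ 2 ≤ A x x)
    (βB : ℝ) (hβB : 0 < βB)
    (hinfsup : ∀ ζ : Q, βB * ‖ζ‖ ≤ ‖B.flip ζ‖) :
    ∃ c₁ c₂ : ℝ, 0 < c₁ ∧ 0 < c₂ ∧
      ∀ (F : X →L[ℝ] ℝ) (G : Q →L[ℝ] ℝ) (x : X) (z : Q),
        (∀ ξ : X, A x ξ + B ξ z = F ξ) → (∀ ζ : Q, B x ζ = G ζ) →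
          ‖x‖ ≤ c₁ * (‖F‖ + ‖G‖) ∧ ‖z‖ ≤ c₂ * (‖F‖ + ‖G‖) := by
  -- Riesz representation of `B` in the second variable.
  set T : Q →L[ℝ] X :=
    { toFun := fun ζ => (InnerProductSpace.toDual ℝ X).symm (B.flip ζ)
      map_add' := by intro ζ η; simp
      map_smul' := by intro c ζ; simp
      cont := ((InnerProductSpace.toDual ℝ X).symm.continuous).comp B.flip.continuous }
    with hTdef
  have hT : ∀ (ζ : Q) (ξ : X), ⟪T ζ, ξ⟫ = B ξ ζ := fun ζ ξ => by
    simp [hTdef, InnerProductSpace.toDual_symm_apply]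
  have hTnorm : ∀ ζ, ‖T ζ‖ = ‖B.flip ζ‖ := fun ζ => by
    have h : InnerProductSpace.toDual ℝ X (T ζ) = B.flip ζ := by
      ext ξ; rw [InnerProductSpace.toDual_apply_apply, hT]; rfl
    rw [← (InnerProductSpace.toDual ℝ X).norm_map (T ζ), h]
  have hTlow : ∀ ζ, βB * ‖ζ‖ ≤ ‖T ζ‖ := fun ζ => by rw [hTnorm]; exact hinfsup ζ
  -- The range of `T` is closed.
  have hanti : AntilipschitzWith (Real.toNNReal βB⁻¹) T := by
    apply T.antilipschitz_of_bound
    intro ζ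
    rw [Real.coe_toNNReal _ (by positivity), inv_mul_eq_div, le_div_iff₀ hβB, mul_comm]
    exact hTlow ζ
  have hclosed : IsClosed (Set.range T) := hanti.isClosed_range T.uniformContinuous
  have hclosed' : IsClosed ((LinearMap.range (T : Q →ₗ[ℝ] X) : Submodule ℝ X) : Set X) := by
    have : ((LinearMap.range (T : Q →ₗ[ℝ] X) : Submodule ℝ X) : Set X) = Set.range T := by
      ext u; simp [LinearMap.mem_range]
    rw [this]; exact hclosed
  haveI : CompleteSpace (LinearMap.range (T : Q →ₗ[ℝ] X) : Submodule ℝ X) := hclosed'.completeSpace_coe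
  -- The kernel of `B`.
  set K : Submodule ℝ X := LinearMap.ker (B : X →ₗ[ℝ] Q →L[ℝ] ℝ) with hKdef
  have hKmem : ∀ v : X, v ∈ K ↔ ∀ ζ : Q, B v ζ = 0 := fun v => by
    constructor
    · intro hv ζ
      have : B v = 0 := hv
      rw [this]; rfl
    · intro hv
      have : B v = 0 := by ext ζ; exact hv ζ
      exact this
  haveI : CompleteSpace K := (ContinuousLinearMap.isClosed_ker B).completeSpace_coe
  -- `K` is the orthogonal complement of the range of `T`.
  have hKorth : K = (LinearMap.range (T : Q →ₗ[ℝ] X))ᗮ := by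
    ext v
    rw [hKmem, Submodule.mem_orthogonal]
    constructor
    · rintro hv u ⟨ζ, rfl⟩
      rw [ContinuousLinearMap.coe_coe, hT]
      exact hv ζ
    · intro hv ζ
      rw [← hT ζ v]
      exact hv (T ζ) ⟨ζ, rfl⟩
  have hKorth' : Kᗮ = LinearMap.range (T : Q →ₗ[ℝ] X) := by
    rw [hKorth, Submodule.orthogonal_orthogonal]
  -- The constants.
  refine ⟨βA⁻¹ + βA⁻¹ * ‖A‖ * βB⁻¹ + βB⁻¹,
    βB⁻¹ * (1 + ‖A‖ * (βA⁻¹ + βA⁻¹ * ‖A‖ * βB⁻¹ + βB⁻¹)), ?_, ?_, ?_⟩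
  · have h1 : (0:ℝ) < βA⁻¹ := by positivity
    have h2 : (0:ℝ) < βB⁻¹ := by positivity
    have h3 : (0:ℝ) ≤ ‖A‖ := ContinuousLinearMap.opNorm_nonneg A
    have h4 : (0:ℝ) ≤ βA⁻¹ * ‖A‖ * βB⁻¹ := by positivity
    linarith
  · have h1 : (0:ℝ) < βA⁻¹ := by positivity
    have h2 : (0:ℝ) < βB⁻¹ := by positivity
    have h3 : (0:ℝ) ≤ ‖A‖ := ContinuousLinearMap.opNorm_nonneg A
    have h4 : (0:ℝ) ≤ ‖A‖ * (βA⁻¹ + βA⁻¹ * ‖A‖ * βB⁻¹ + βB⁻¹) := by positivity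
    have h5 : (0:ℝ) < 1 + ‖A‖ * (βA⁻¹ + βA⁻¹ * ‖A‖ * βB⁻¹ + βB⁻¹) := by linarith
    exact mul_pos h2 h5
  intro F G x z hF hG
  have hAnn : (0:ℝ) ≤ ‖A‖ := ContinuousLinearMap.opNorm_nonneg A
  have hFnn : (0:ℝ) ≤ ‖F‖ := ContinuousLinearMap.opNorm_nonneg F
  have hGnn : (0:ℝ) ≤ ‖G‖ := ContinuousLinearMap.opNorm_nonneg G
  -- Orthogonal decomposition of `x`.
  obtain ⟨x₀, hx₀, x₁, hx₁, hxsum⟩ := K.exists_add_mem_mem_orthogonal x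
  have hBx₀ : ∀ ζ, B x₀ ζ = 0 := (hKmem x₀).mp hx₀
  have hBx₁ : ∀ ζ, B x₁ ζ = G ζ := fun ζ => by
    have h := hG ζ
    rw [hxsum] at h
    simpa [hBx₀ ζ] using h
  -- Bound on `x₁` using the inf-sup condition.
  rw [hKorth'] at hx₁
  obtain ⟨w, hw⟩ := hx₁
  have hx₁norm : ‖x₁‖ ≤ βB⁻¹ * ‖G‖ := by
    rcases eq_or_lt_of_le (norm_nonneg x₁) with h0 | h0
    · rw [← h0]; positivity
    · have hsq : ‖x₁‖ ^ 2 = ⟪T w, x₁⟫ := by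
        rw [ContinuousLinearMap.coe_coe] at hw; rw [hw, real_inner_self_eq_norm_sq]
      have h1 : ‖x₁‖ ^ 2 ≤ ‖G‖ * ‖w‖ := by
        rw [hsq, hT w x₁, hBx₁ w]
        exact le_trans (le_abs_self _) (G.le_opNorm w)
      have h2 : βB * ‖w‖ ≤ ‖x₁‖ := by rw [← hw]; exact hTlow w
      have h3 : ‖w‖ ≤ βB⁻¹ * ‖x₁‖ := by
        rw [inv_mul_eq_div, le_div_iff₀ hβB, mul_comm]; exact h2
      have h4 : ‖x₁‖ ^ 2 ≤ ‖G‖ * (βB⁻¹ * ‖x₁‖) :=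
        h1.trans (by exact mul_le_mul_of_nonneg_left h3 hGnn)
      have h5 : ‖x₁‖ * ‖x₁‖ ≤ (βB⁻¹ * ‖G‖) * ‖x₁‖ := by nlinarith
      exact le_of_mul_le_mul_right h5 h0
  -- Bound on `x₀` using coercivity.
  have hAx₀x : A x₀ x = F x₀ := by
    rw [hAsymm x₀ x]
    have h := hF x₀
    rw [hBx₀ z] at h  -- wrong rewrite target? B x₀ z
    linarith [h]
  have hx₀norm : ‖x₀‖ ≤ βA⁻¹ * (‖F‖ + ‖A‖ * ‖x₁‖) := by
    have hco : βA * ‖x₀‖ ^ 2 ≤ A x₀ x₀ := hAcoer x₀ hBx₀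
    have hsplit : A x₀ x₀ = F x₀ - A x₀ x₁ := by
      have : A x₀ x = A x₀ x₀ + A x₀ x₁ := by rw [hxsum]; exact map_add (A x₀) x₀ x₁
      rw [hAx₀x] at this; linarith
    have hFb : F x₀ ≤ ‖F‖ * ‖x₀‖ := le_trans (le_abs_self _) (F.le_opNorm x₀)
    have hAb : -(A x₀ x₁) ≤ ‖A‖ * ‖x₀‖ * ‖x₁‖ := by
      have h1 : |A x₀ x₁| ≤ ‖A x₀‖ * ‖x₁‖ := (A x₀).le_opNorm x₁
      have h2 : ‖A x₀‖ ≤ ‖A‖ * ‖x₀‖ := A.le_opNorm x₀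
      have h3 : |A x₀ x₁| ≤ ‖A‖ * ‖x₀‖ * ‖x₁‖ :=
        h1.trans (mul_le_mul_of_nonneg_right h2 (norm_nonneg x₁))
      linarith [neg_abs_le (A x₀ x₁)]
    have hkey : βA * ‖x₀‖ ^ 2 ≤ (‖F‖ + ‖A‖ * ‖x₁‖) * ‖x₀‖ := by nlinarith
    rcases eq_or_lt_of_le (norm_nonneg x₀) with h0 | h0
    · rw [← h0]
      have : (0:ℝ) ≤ ‖x₁‖ := norm_nonneg _
      positivity
    · rw [inv_mul_eq_div, le_div_iff₀ hβA]
      have : βA * ‖x₀‖ * ‖x₀‖ ≤ (‖F‖ + ‖A‖ * ‖x₁‖) * ‖x₀‖ := by nlinarith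
      calc ‖x₀‖ * βA = βA * ‖x₀‖ := by ring
        _ ≤ ‖F‖ + ‖A‖ * ‖x₁‖ := le_of_mul_le_mul_right (by nlinarith) h0
  -- Bound on `x`.
  have hxnorm : ‖x‖ ≤ (βA⁻¹ + βA⁻¹ * ‖A‖ * βB⁻¹ + βB⁻¹) * (‖F‖ + ‖G‖) := by
    have htri : ‖x‖ ≤ ‖x₀‖ + ‖x₁‖ := by rw [hxsum]; exact norm_add_le x₀ x₁
    have h1 : (0:ℝ) < βA⁻¹ := by positivity
    have h2 : (0:ℝ) < βB⁻¹ := by positivity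
    have hA1 : ‖A‖ * ‖x₁‖ ≤ ‖A‖ * (βB⁻¹ * ‖G‖) := mul_le_mul_of_nonneg_left hx₁norm hAnn
    have hA2 : βA⁻¹ * (‖F‖ + ‖A‖ * ‖x₁‖) ≤ βA⁻¹ * (‖F‖ + ‖A‖ * (βB⁻¹ * ‖G‖)) :=
      mul_le_mul_of_nonneg_left (by linarith) h1.le
    have e1 : (0:ℝ) ≤ βA⁻¹ * ‖G‖ := mul_nonneg h1.le hGnn
    have e2 : (0:ℝ) ≤ βA⁻¹ * ‖A‖ * βB⁻¹ * ‖F‖ :=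
      mul_nonneg (mul_nonneg (mul_nonneg h1.le hAnn) h2.le) hFnn
    have e3 : (0:ℝ) ≤ βB⁻¹ * ‖F‖ := mul_nonneg h2.le hFnn
    nlinarith [hA2]
  refine ⟨hxnorm, ?_⟩
  -- Bound on `z` using the inf-sup condition.
  have hBz : ‖B.flip z‖ ≤ ‖F‖ + ‖A‖ * ‖x‖ := by
    apply ContinuousLinearMap.opNorm_le_bound
    · have : (0:ℝ) ≤ ‖x‖ := norm_nonneg _
      positivity
    · intro ξ
      have heq : B ξ z = F ξ - A x ξ := by have := hF ξ; linarith
      have h1 : |F ξ| ≤ ‖F‖ * ‖ξ‖ := F.le_opNorm ξ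
      have h2 : |A x ξ| ≤ ‖A‖ * ‖x‖ * ‖ξ‖ :=
        ((A x).le_opNorm ξ).trans
          (mul_le_mul_of_nonneg_right (A.le_opNorm x) (norm_nonneg ξ))
      have : ‖B.flip z ξ‖ = |B ξ z| := rfl
      rw [this, heq]
      calc |F ξ - A x ξ| ≤ |F ξ| + |A x ξ| := abs_sub _ _
        _ ≤ ‖F‖ * ‖ξ‖ + ‖A‖ * ‖x‖ * ‖ξ‖ := add_le_add h1 h2
        _ = (‖F‖ + ‖A‖ * ‖x‖) * ‖ξ‖ := by ring
  have hzn : βB * ‖z‖ ≤ ‖F‖ + ‖A‖ * ‖x‖ := (hinfsup z).trans hBz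
  have h2 : (0:ℝ) < βB⁻¹ := by positivity
  have hxnn : (0:ℝ) ≤ ‖x‖ := norm_nonneg _
  rw [show βB⁻¹ * (1 + ‖A‖ * (βA⁻¹ + βA⁻¹ * ‖A‖ * βB⁻¹ + βB⁻¹)) * (‖F‖ + ‖G‖)
      = βB⁻¹ * ((‖F‖ + ‖G‖) + ‖A‖ * ((βA⁻¹ + βA⁻¹ * ‖A‖ * βB⁻¹ + βB⁻¹) * (‖F‖ + ‖G‖))) by ring]
  have hz2 : ‖z‖ ≤ βB⁻¹ * (‖F‖ + ‖A‖ * ‖x‖) := by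
    rw [inv_mul_eq_div, le_div_iff₀ hβB, mul_comm]; exact hzn
  calc ‖z‖ ≤ βB⁻¹ * (‖F‖ + ‖A‖ * ‖x‖) := hz2
    _ ≤ βB⁻¹ * ((‖F‖ + ‖G‖) + ‖A‖ * ((βA⁻¹ + βA⁻¹ * ‖A‖ * βB⁻¹ + βB⁻¹) * (‖F‖ + ‖G‖))) := by
        apply mul_le_mul_of_nonneg_left _ (le_of_lt h2)
        have := mul_le_mul_of_nonneg_left hxnorm hAnn
        linarith
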